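/- The map Ω from set compositions of [n] to acyclic orientations (over all flats) defined by orienting each non-contracted hyperedge U with head U ∩ A_i for the minimal i with A_i ∩ U ≠ ∅ is well-defined: the resulting oriented graph has no directed cycle, and the partition [n]/Ω(A) refines {A_1,...,A_k}. -/

import Mathlib

variable {n : ℕ}

/-- Equivalence generated by identifying all vertices within each head; its
classes form the set partition `[n]/O`. -/
def HeadEqv (G : Finset (Finset (Fin n)))
    (O : Finset (Fin n) → Finset (Fin n) × Finset (Fin n)) :
    Fin n → Fin n → Prop :=
  Relation.EqvGen (fun a b => ∃ U ∈ G, a ∈ (O U).1 ∧ b ∈ (O U).1)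

/-- Arc relation of the quotient directed multigraph `G/O`. -/
def OArc (G : Finset (Finset (Fin n)))
    (O : Finset (Fin n) → Finset (Fin n) × Finset (Fin n))
    (a b : Fin n) : Prop :=
  ∃ U ∈ G, ∃ a', HeadEqv G O a a' ∧ a' ∈ (O U).1 ∧ b ∈ (O U).2

/-- `G/O` has no directed cycle. -/
def AcyclicO (G : Finset (Finset (Fin n)))
    (O : Finset (Fin n) → Finset (Fin n) × Finset (Fin n)) : Prop :=
  ¬ ∃ a b, OArc G O a b ∧
    Relation.ReflTransGen (fun x y => HeadEqv G O x y ∨ OArc G O x y) b a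

private lemma mem_foldr_union {n : ℕ} (L : List (Finset (Fin n))) (v : Fin n)
    (h : v ∈ L.foldr (· ∪ ·) ∅) : ∃ A ∈ L, v ∈ A := by
  induction L with
  | nil => simp at h
  | cons a t ih =>
      simp only [List.foldr_cons, Finset.mem_union] at h
      rcases h with h | h
      · exact ⟨a, List.mem_cons_self, h⟩
      · obtain ⟨A, hA, hv⟩ := ih h
        exact ⟨A, List.mem_cons_of_mem _ hA, hv⟩

/-- The map `Ω` is well defined: given a set composition `(A_1,…,A_k)` of
`[n]`, orienting each non-contracted hyperedge `U` as
`(U ∩ A_i, U \ A_i)` for the minimal `i` with `A_i ∩ U ≠ ∅` yields an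
oriented graph with no directed cycle, whose partition `[n]/Ω(A)` refines
`{A_1,…,A_k}`. -/
theorem stmt17 (G : Finset (Finset (Fin n))) (L : List (Finset (Fin n)))
    (hne : ∀ A ∈ L, A.Nonempty)
    (hdisj : List.Pairwise Disjoint L)
    (hcover : L.foldr (· ∪ ·) ∅ = Finset.univ)
    (G' : Finset (Finset (Fin n)))
    (hG' : ∀ U, U ∈ G' ↔ U ∈ G ∧ ¬ ∃ A ∈ L, U ⊆ A)
    (O : Finset (Fin n) → Finset (Fin n) × Finset (Fin n))
    (hO : ∀ U ∈ G', ∃ i : Fin L.length,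
      (U ∩ L.get i).Nonempty ∧
      (∀ j : Fin L.length, j < i → U ∩ L.get j = ∅) ∧
      O U = (U ∩ L.get i, U \ L.get i)) :
    AcyclicO G' O ∧
      ∀ v w : Fin n, HeadEqv G' O v w → ∀ A ∈ L, (v ∈ A ↔ w ∈ A) := by
  -- every vertex lies in a unique part
  have hex : ∀ v : Fin n, ∃ i : Fin L.length, v ∈ L.get i := by
    intro v
    have : v ∈ L.foldr (· ∪ ·) ∅ := by rw [hcover]; exact Finset.mem_univ v
    obtain ⟨A, hA, hv⟩ := mem_foldr_union L v this
    obtain ⟨i, hi⟩ := List.mem_iff_get.mp hA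
    exact ⟨i, hi ▸ hv⟩
  have hpw : ∀ i j : Fin L.length, i < j → Disjoint (L.get i) (L.get j) :=
    List.pairwise_iff_get.mp hdisj
  have huniq : ∀ (v : Fin n) (i j : Fin L.length),
      v ∈ L.get i → v ∈ L.get j → i = j := by
    intro v i j hi hj
    by_contra hij
    rcases lt_or_gt_of_ne hij with h | h
    · exact (Finset.disjoint_left.mp (hpw i j h)) hi hj
    · exact (Finset.disjoint_left.mp (hpw j i h)) hj hi
  classical
  set idx : Fin n → Fin L.length := fun v => (hex v).choose with hidx
  have hmem : ∀ v : Fin n, v ∈ L.get (idx v) := fun v => (hex v).choose_spec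
  have hidxeq : ∀ (v : Fin n) (i : Fin L.length), v ∈ L.get i → idx v = i :=
    fun v i h => huniq v (idx v) i (hmem v) h
  -- head relation preserves idx
  have hH : ∀ a b : Fin n, HeadEqv G' O a b → idx a = idx b := by
    intro a b h
    induction h with
    | rel x y hxy =>
        obtain ⟨U, hU, hx, hy⟩ := hxy
        obtain ⟨i, _, _, hOU⟩ := hO U hU
        rw [hOU] at hx hy
        rw [hidxeq x i (Finset.mem_inter.mp hx).2, hidxeq y i (Finset.mem_inter.mp hy).2]
    | refl => rfl
    | symm _ _ _ ih => exact ih.symm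
    | trans _ _ _ _ _ ih1 ih2 => exact ih1.trans ih2
  -- arcs strictly increase idx
  have hA : ∀ a b : Fin n, OArc G' O a b → idx a < idx b := by
    intro a b h
    obtain ⟨U, hU, a', ha', hx, hy⟩ := h
    obtain ⟨i, _, hmin, hOU⟩ := hO U hU
    rw [hOU] at hx hy
    have hxi : idx a' = i := hidxeq a' i (Finset.mem_inter.mp hx).2
    have hbU : b ∈ U := (Finset.mem_sdiff.mp hy).1
    have hbni : b ∉ L.get i := (Finset.mem_sdiff.mp hy).2
    have h1 : idx a = i := (hH a a' ha').trans hxi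
    have h2 : ¬ idx b < i := by
      intro hlt
      have := hmin (idx b) hlt
      have : b ∈ U ∩ L.get (idx b) := Finset.mem_inter.mpr ⟨hbU, hmem b⟩
      simp_all
    have h3 : idx b ≠ i := fun he => hbni (he ▸ hmem b)
    rw [h1]
    exact lt_of_le_of_ne (not_lt.mp h2) (Ne.symm h3)
  constructor
  · rintro ⟨a, b, harc, hpath⟩
    have hle : ∀ x y : Fin n,
        Relation.ReflTransGen (fun x y => HeadEqv G' O x y ∨ OArc G' O x y) x y →
        idx x ≤ idx y := by
      intro x y h
      induction h with
      | refl => exact le_refl _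
      | tail _ hstep ih =>
          rcases hstep with h | h
          · exact ih.trans (le_of_eq (hH _ _ h))
          · exact ih.trans (le_of_lt (hA _ _ h))
    exact absurd (hle b a hpath) (not_le.mpr (hA a b harc))
  · intro v w h A hA'
    obtain ⟨j, hj⟩ := List.mem_iff_get.mp hA'
    have heq := hH v w h
    subst hj
    constructor
    · intro hv
      have : idx v = j := hidxeq v j hv
      rw [← heq.symm.trans this]; exact hmem w
    · intro hw
      have : idx w = j := hidxeq w j hw
      rw [← heq.trans this]; exact hmem v
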